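/- Every open subgroup H of a topological group G is well-placed in G. Moreover, one can choose the witnessing map of the form x ↦ δ_{φ(x)} for an H-left-equivariant map φ : G → H (namely φ(x) = x·σ(Hx)⁻¹ for a section σ of the right-coset map) which is uniformly continuous for the right uniformities of G and H. -/

import Mathlib

open Filter Topology MeasureTheory UniformConvergence
open scoped Classical

/-- `Δ(G)`: finitely supported probability densities on `G`. -/
def IsDelta {G : Type*} (μ : G → ℝ) : Prop :=
  (Function.support μ).Finite ∧ (∀ x, 0 ≤ μ x) ∧ ∑ᶠ x, μ x = 1

/-- The pairing `⟨μ, f⟩ = ∑ₓ μ(x) · f(x)`. -/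
noncomputable def dpair {G : Type*} (μ f : G → ℝ) : ℝ := ∑ᶠ x, μ x * f x

/-- Left-translation action on densities: `(g · μ)(x) = μ(g⁻¹x)`. -/
def actD {G : Type*} [Group G] (g : G) (μ : G → ℝ) : G → ℝ := fun x => μ (g⁻¹ * x)

/-- Action on functionals: `(g · ξ)(f) = ξ(f ∘ λ_g)`. -/
def actF {G : Type*} [Group G] (g : G) (ξ : (G → ℝ) → ℝ) : (G → ℝ) → ℝ :=
  fun f => ξ fun x => f (g * x)

/-- The functional `f ↦ ⟨μ, f⟩` associated with a density `μ`. -/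
noncomputable def toFunc {G : Type*} (μ : G → ℝ) : (G → ℝ) → ℝ := fun f => dpair μ f

/-- Bounded right-uniformly continuous functions. -/
def IsRUCB {G : Type*} [Group G] [TopologicalSpace G] (f : G → ℝ) : Prop :=
  (∃ C : ℝ, ∀ x, |f x| ≤ C) ∧
  ∀ ε > (0 : ℝ), ∃ U ∈ nhds (1 : G), ∀ u ∈ U, ∀ x : G, |f x - f (u * x)| ≤ ε

/-- RUEB sets: sup-norm bounded, right-uniformly equicontinuous. -/
def IsRUEB {G : Type*} [Group G] [TopologicalSpace G] (B : Set (G → ℝ)) : Prop :=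
  (∃ C : ℝ, ∀ f ∈ B, ∀ x : G, |f x| ≤ C) ∧
  ∀ ε > (0 : ℝ), ∃ U ∈ nhds (1 : G), ∀ u ∈ U, ∀ f ∈ B, ∀ x : G, |f x - f (u * x)| ≤ ε

/-- Bounded left-uniformly continuous functions. -/
def IsLUCB {G : Type*} [Group G] [TopologicalSpace G] (f : G → ℝ) : Prop :=
  (∃ C : ℝ, ∀ x, |f x| ≤ C) ∧
  ∀ ε > (0 : ℝ), ∃ U ∈ nhds (1 : G), ∀ u ∈ U, ∀ x : G, |f x - f (x * u)| ≤ ε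

/-- LUEB sets: sup-norm bounded, left-uniformly equicontinuous. -/
def IsLUEB {G : Type*} [Group G] [TopologicalSpace G] (B : Set (G → ℝ)) : Prop :=
  (∃ C : ℝ, ∀ f ∈ B, ∀ x : G, |f x| ≤ C) ∧
  ∀ ε > (0 : ℝ), ∃ U ∈ nhds (1 : G), ∀ u ∈ U, ∀ f ∈ B, ∀ x : G, |f x - f (x * u)| ≤ ε

/-- The UEB uniformity (uniform convergence on RUEB sets) on the space of
functionals on functions on `G`. -/
noncomputable def uebUniformityR (G : Type*) [Group G] [TopologicalSpace G] :
    UniformSpace ((G → ℝ) → ℝ) :=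
  ⨅ (B : Set (G → ℝ)) (_ : IsRUEB B),
    UniformSpace.comap (fun ξ => UniformFun.ofFun fun f : B => ξ (f : G → ℝ))
      (UniformFun.uniformSpace (↥B) ℝ)

/-- The UEB topology associated with the right uniformity. -/
noncomputable def uebTopR (G : Type*) [Group G] [TopologicalSpace G] :
    TopologicalSpace ((G → ℝ) → ℝ) := (uebUniformityR G).toTopologicalSpace

/-- `Mean_u(G_r)`: the UEB-closure of `Δ(G)` inside the functionals. -/
noncomputable def MeanUR (G : Type*) [Group G] [TopologicalSpace G] :
    Set ((G → ℝ) → ℝ) :=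
  @closure _ (uebTopR G) (toFunc '' {μ : G → ℝ | IsDelta μ})

/-- The UEB uniformity (uniform convergence on LUEB sets). -/
noncomputable def uebUniformityL (G : Type*) [Group G] [TopologicalSpace G] :
    UniformSpace ((G → ℝ) → ℝ) :=
  ⨅ (B : Set (G → ℝ)) (_ : IsLUEB B),
    UniformSpace.comap (fun ξ => UniformFun.ofFun fun f : B => ξ (f : G → ℝ))
      (UniformFun.uniformSpace (↥B) ℝ)

/-- The UEB topology associated with the left uniformity. -/
noncomputable def uebTopL (G : Type*) [Group G] [TopologicalSpace G] :
    TopologicalSpace ((G → ℝ) → ℝ) := (uebUniformityL G).toTopologicalSpace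

/-- `Mean_u(G_ℓ)`: the UEB-closure of `Δ(G)`. -/
noncomputable def MeanUL (G : Type*) [Group G] [TopologicalSpace G] :
    Set ((G → ℝ) → ℝ) :=
  @closure _ (uebTopL G) (toFunc '' {μ : G → ℝ | IsDelta μ})

/-- Amenability of an action of a topological group on a topological space. -/
def AmenableAction {G : Type*} [Group G] [TopologicalSpace G]
    {X : Type*} [TopologicalSpace X] (act : G → X → X) : Prop :=
  ∃ (ι : Type) (pι : Preorder ι) (_ : Nonempty ι)
    (_ : IsDirected ι fun a b => pι.le a b)
    (μ : ι → X → (G → ℝ) → ℝ),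
    (∀ i x, μ i x ∈ MeanUR G) ∧
    (∀ i, @Continuous X ((G → ℝ) → ℝ) inferInstance (uebTopR G) (μ i)) ∧
    ∀ (g : G) (B : Set (G → ℝ)), IsRUEB B → ∀ ε > (0 : ℝ),
      ∃ i₀, ∀ i, pι.le i₀ i → ∀ x, ∀ f ∈ B,
        |actF g (μ i x) f - μ i (act g x) f| ≤ ε

/-- Skew-amenability of an action. -/
def SkewAmenableAction {G : Type*} [Group G] [TopologicalSpace G]
    {X : Type*} [TopologicalSpace X] (act : G → X → X) : Prop :=
  ∃ (ι : Type) (pι : Preorder ι) (_ : Nonempty ι)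
    (_ : IsDirected ι fun a b => pι.le a b)
    (μ : ι → X → (G → ℝ) → ℝ),
    (∀ i x, μ i x ∈ MeanUL G) ∧
    (∀ i, @Continuous X ((G → ℝ) → ℝ) inferInstance (uebTopL G) (μ i)) ∧
    ∀ (g : G) (B : Set (G → ℝ)), IsLUEB B → ∀ ε > (0 : ℝ),
      ∃ i₀, ∀ i, pι.le i₀ i → ∀ x, ∀ f ∈ B,
        |actF g (μ i x) f - μ i (act g x) f| ≤ ε

/-- AD-amenability (Anantharaman-Delaroche) of an action of a locally compact
group, with respect to a left Haar measure `ν`. -/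
def ADAmenableAction {G : Type*} [Group G] [TopologicalSpace G] [MeasurableSpace G]
    (ν : Measure G) {X : Type*} [TopologicalSpace X] (act : G → X → X) : Prop :=
  ∃ (ι : Type) (pι : Preorder ι) (_ : Nonempty ι)
    (_ : IsDirected ι fun a b => pι.le a b)
    (μ : ι → X → G → ℝ),
    (∀ i x, Integrable (μ i x) ν ∧ (∀ᵐ t ∂ν, 0 ≤ μ i x t) ∧ ∫ t, μ i x t ∂ν = 1) ∧
    (∀ i (h : G → ℝ), Continuous h → Tendsto h (cocompact G) (nhds 0) →
      Continuous fun x => ∫ t, h t * μ i x t ∂ν) ∧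
    ∀ K : Set G, IsCompact K → ∀ ε > (0 : ℝ),
      ∃ i₀, ∀ i, pι.le i₀ i → ∀ g ∈ K, ∀ x,
        ∫ t, |μ i x (g⁻¹ * t) - μ i (act g x) t| ∂ν ≤ ε

/-- Amenability of a topological group: a left-invariant mean on `RUCB(G)`. -/
def AmenableGroup (G : Type*) [Group G] [TopologicalSpace G] : Prop :=
  ∃ m : (G → ℝ) → ℝ,
    (∀ f h : G → ℝ, IsRUCB f → IsRUCB h → m (f + h) = m f + m h) ∧
    (∀ (c : ℝ) (f : G → ℝ), IsRUCB f → m (c • f) = c * m f) ∧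
    (∀ f : G → ℝ, IsRUCB f → (∀ x, 0 ≤ f x) → 0 ≤ m f) ∧
    m (fun _ => 1) = 1 ∧
    ∀ (g : G) (f : G → ℝ), IsRUCB f → m (fun x => f (g * x)) = m f

/-- Well-placed subgroups: there is an `H`-left-equivariant, right-uniformly
continuous map `G → Mean_u(H_r)` (uniform continuity spelled out via the basic
entourages of the right uniformity of `G` and the UEB pseudometrics). -/
def WellPlaced {G : Type*} [Group G] [TopologicalSpace G] (H : Subgroup G) : Prop :=
  ∃ φ : G → ((↥H → ℝ) → ℝ),
    (∀ g, φ g ∈ MeanUR ↥H) ∧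
    (∀ (h : ↥H) (g : G), φ ((h : G) * g) = actF h (φ g)) ∧
    ∀ B : Set (↥H → ℝ), IsRUEB B → ∀ ε > (0 : ℝ), ∃ U ∈ nhds (1 : G),
      ∀ x y : G, x * y⁻¹ ∈ U → ∀ f ∈ B, |φ x f - φ y f| ≤ ε


/-- Right-coset equivalence: `x ≈ y` iff `x * y⁻¹ ∈ H`. -/
def wpSetoid {G : Type*} [Group G] (H : Subgroup G) : Setoid G where
  r x y := x * y⁻¹ ∈ H
  iseqv := by
    constructor
    · intro x; simpa using H.one_mem
    · intro x y h; simpa using H.inv_mem h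
    · intro x y z h1 h2
      have := H.mul_mem h1 h2
      simpa [mul_assoc] using this

/-- A section of the right-coset map. -/
noncomputable def wpSigma {G : Type*} [Group G] (H : Subgroup G) (x : G) : G :=
  (Quotient.mk (wpSetoid H) x).out

lemma wpSigma_spec {G : Type*} [Group G] (H : Subgroup G) (x : G) :
    x * (wpSigma H x)⁻¹ ∈ H := by
  have h : Quotient.mk (wpSetoid H) (wpSigma H x) = Quotient.mk (wpSetoid H) x :=
    Quotient.out_eq _
  have h2 : wpSigma H x * x⁻¹ ∈ H := Quotient.exact h
  simpa using H.inv_mem h2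

lemma wpSigma_eq {G : Type*} [Group G] (H : Subgroup G) {x y : G}
    (h : x * y⁻¹ ∈ H) : wpSigma H x = wpSigma H y := by
  unfold wpSigma
  congr 1
  exact Quotient.sound h

/-- `φ(x) = x · σ(Hx)⁻¹`. -/
noncomputable def wpPhi {G : Type*} [Group G] (H : Subgroup G) (x : G) : ↥H :=
  ⟨x * (wpSigma H x)⁻¹, wpSigma_spec H x⟩

lemma toFunc_point {X : Type*} {inst : DecidableEq X} (a : X) (f : X → ℝ) :
    toFunc (fun h : X => @ite _ (h = a) (inst h a) (1 : ℝ) 0) f = f a := by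
  unfold toFunc dpair
  rw [finsum_eq_single _ a]
  · simp
  · intro x hx; simp [hx]

lemma isDelta_point {X : Type*} {inst : DecidableEq X} (a : X) :
    IsDelta (fun h : X => @ite _ (h = a) (inst h a) (1 : ℝ) 0) := by
  refine ⟨?_, ?_, ?_⟩
  · apply Set.Finite.subset (Set.finite_singleton a)
    intro x hx
    simp only [Function.mem_support] at hx
    by_contra h
    exact hx (if_neg h)
  · intro x; dsimp only; split <;> norm_num
  · rw [finsum_eq_single _ a]
    · simp
    · intro x hx; simp [hx]


/-- Proposition 5.8: every open subgroup is well-placed, with a witness given by point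
masses `x ↦ δ_{φ(x)}` for an `H`-left-equivariant, right-uniformly continuous
map `φ : G → H`. -/
theorem open_subgroup_well_placed {G : Type*} [Group G] [TopologicalSpace G]
    [IsTopologicalGroup G] (H : Subgroup G) (hH : IsOpen (H : Set G)) :
    WellPlaced H ∧
    ∃ (φ : G → ↥H) (ψ : G → ((↥H → ℝ) → ℝ)),
      ψ = (fun x => toFunc fun h : ↥H => if h = φ x then (1 : ℝ) else 0) ∧
      (∀ (h : ↥H) (x : G), φ ((h : G) * x) = h * φ x) ∧
      (∀ U ∈ nhds (1 : ↥H), ∃ V ∈ nhds (1 : G),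
        ∀ x y : G, x * y⁻¹ ∈ V → φ x * (φ y)⁻¹ ∈ U) ∧
      (∀ g : G, ψ g ∈ MeanUR ↥H) ∧
      (∀ (h : ↥H) (g : G), ψ ((h : G) * g) = actF h (ψ g)) ∧
      ∀ B : Set (↥H → ℝ), IsRUEB B → ∀ ε > (0 : ℝ), ∃ U ∈ nhds (1 : G),
        ∀ x y : G, x * y⁻¹ ∈ U → ∀ f ∈ B, |ψ x f - ψ y f| ≤ ε := by
  classical
  have hψval : ∀ (x : G) (f : ↥H → ℝ),
      toFunc (fun h : ↥H => if h = wpPhi H x then (1 : ℝ) else 0) f = f (wpPhi H x) :=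
    fun x f => toFunc_point _ f
  have hequiv : ∀ (h : ↥H) (x : G), wpPhi H ((h : G) * x) = h * wpPhi H x := by
    intro h x
    apply Subtype.ext
    show (h : G) * x * (wpSigma H ((h : G) * x))⁻¹ = (h : G) * (x * (wpSigma H x)⁻¹)
    rw [wpSigma_eq H (show (h : G) * x * x⁻¹ ∈ H by simp only [mul_inv_cancel_right]; exact h.2)]
    rw [mul_assoc]
  have hucφ : ∀ U ∈ nhds (1 : ↥H), ∃ V ∈ nhds (1 : G),
      ∀ x y : G, x * y⁻¹ ∈ V → wpPhi H x * (wpPhi H y)⁻¹ ∈ U := by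
    intro U hU
    refine ⟨(↑) '' U, ?_, ?_⟩
    · have hm : IsOpenMap ((↑) : ↥H → G) := hH.isOpenMap_subtype_val
      simpa using hm.image_mem_nhds hU
    · intro x y hxy
      obtain ⟨u, hu, huv⟩ := hxy
      have hxyH : x * y⁻¹ ∈ H := huv ▸ u.2
      have hσ : wpSigma H x = wpSigma H y := wpSigma_eq H hxyH
      have heq : wpPhi H x * (wpPhi H y)⁻¹ = u := by
        apply Subtype.ext
        show x * (wpSigma H x)⁻¹ * (y * (wpSigma H y)⁻¹)⁻¹ = (u : G)
        rw [hσ, huv]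
        group
      rw [heq]; exact hu
  set ψ : G → ((↥H → ℝ) → ℝ) :=
    fun x => toFunc fun h : ↥H => if h = wpPhi H x then (1 : ℝ) else 0 with hψdef
  have hψmem : ∀ g : G, ψ g ∈ MeanUR ↥H := by
    intro g
    show ψ g ∈ @closure _ (uebTopR ↥H) (toFunc '' {μ : ↥H → ℝ | IsDelta μ})
    have hmem : (fun h : ↥H => if h = wpPhi H g then (1 : ℝ) else 0) ∈
        {μ : ↥H → ℝ | IsDelta μ} := isDelta_point _
    have himg : ψ g ∈ toFunc '' {μ : ↥H → ℝ | IsDelta μ} := ⟨_, hmem, rfl⟩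
    exact @subset_closure ((↥H → ℝ) → ℝ) (uebTopR ↥H) _ _ himg
  have hψequiv : ∀ (h : ↥H) (g : G), ψ ((h : G) * g) = actF h (ψ g) := by
    intro h g
    funext f
    show ψ ((h : G) * g) f = ψ g (fun x => f (h * x))
    simp only [hψdef]
    rw [hψval, hψval, hequiv]
  have hψuc : ∀ B : Set (↥H → ℝ), IsRUEB B → ∀ ε > (0 : ℝ), ∃ U ∈ nhds (1 : G),
      ∀ x y : G, x * y⁻¹ ∈ U → ∀ f ∈ B, |ψ x f - ψ y f| ≤ ε := by
    intro B hB ε hε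
    obtain ⟨U, hU, hUeq⟩ := hB.2 ε hε
    obtain ⟨V, hV, hVspec⟩ := hucφ U hU
    refine ⟨V, hV, ?_⟩
    intro x y hxy f hf
    show |ψ x f - ψ y f| ≤ ε
    rw [hψdef]
    simp only [hψval]
    have h1 := hUeq _ (hVspec x y hxy) f hf (wpPhi H y)
    rw [abs_sub_comm]
    simpa using h1
  exact ⟨⟨ψ, hψmem, hψequiv, hψuc⟩, wpPhi H, ψ, rfl, hequiv, hucφ, hψmem, hψequiv, hψuc⟩
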